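/- Let F be a frame and P ⊆ F a subset closed under binary meets such that every element of F is a join of elements of P. Equip P with the induced covering relation: {B_i ≤ B | i ∈ I} is a covering iff ⋁_{i∈I} B_i = B in F. Then the map sending U ∈ F to the propositional sheaf h_U = Hom_F(−, U) restricted to P is an order isomorphism from F onto the poset of propositional sheaves on (P, τ). -/
import Mathlib


/-- A propositional sheaf on the site given by a subset `P` of a frame `α`, with the
induced covering relation (`S` covers `b` iff `S ⊆ P`, all members of `S` are `≤ b`,
and `sSup S = b`): a subset `f ⊆ P`, downward closed within `P`, and closed under
coverings. -/
def IsPropSheaf {α : Type*} [Order.Frame α] (P : Set α) (f : Set α) : Prop :=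
  f ⊆ P ∧ (∀ b ∈ f, ∀ c ∈ P, c ≤ b → c ∈ f) ∧
    ∀ b ∈ P, ∀ S ⊆ P, (∀ s ∈ S, s ≤ b) → sSup S = b → S ⊆ f → b ∈ f

/-- **Basis theorem.** Let `α` be a frame and `P ⊆ α` a subset closed under binary
meets such that every element of `α` is a join of elements of `P`.  Then
`U ↦ h_U = {b ∈ P | b ≤ U}` is an order isomorphism from `α` onto the poset of
propositional sheaves on `(P, τ)` (ordered by inclusion). -/
theorem basis_theorem {α : Type*} [Order.Frame α] (P : Set α)
    (hmeet : ∀ a ∈ P, ∀ b ∈ P, a ⊓ b ∈ P)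
    (hbasis : ∀ U : α, ∃ S ⊆ P, sSup S = U) :
    ∃ e : α ≃o {f : Set α // IsPropSheaf P f},
      ∀ U : α, (e U : Set α) = {b ∈ P | b ≤ U} := by
  have hsheaf : ∀ U : α, IsPropSheaf P {b ∈ P | b ≤ U} := by
    intro U
    refine ⟨fun b hb => hb.1, fun b hb c hc hcb => ⟨hc, hcb.trans hb.2⟩,
      fun b hb S hSP hSb hsup hSf => ⟨hb, ?_⟩⟩
    rw [← hsup]
    exact sSup_le fun s hs => (hSf hs).2
  have hleft : ∀ U : α, sSup {b ∈ P | b ≤ U} = U := by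
    intro U
    obtain ⟨S, hSP, hS⟩ := hbasis U
    apply le_antisymm (sSup_le fun b hb => hb.2)
    rw [← hS]
    exact sSup_le_sSup fun s hs => ⟨hSP hs, hS ▸ le_sSup hs⟩
  have hright : ∀ f : Set α, IsPropSheaf P f → {b ∈ P | b ≤ sSup f} = f := by
    intro f hf
    apply Set.Subset.antisymm
    · rintro b ⟨hbP, hble⟩
      refine hf.2.2 b hbP ((fun c => b ⊓ c) '' f) ?_ ?_ ?_ ?_
      · rintro _ ⟨c, hc, rfl⟩; exact hmeet b hbP c (hf.1 hc)
      · rintro _ ⟨c, hc, rfl⟩; exact inf_le_left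
      · rw [sSup_image]
        simpa [inf_sSup_eq] using inf_eq_left.mpr hble
      · rintro _ ⟨c, hc, rfl⟩
        exact hf.2.1 c hc _ (hmeet b hbP c (hf.1 hc)) inf_le_right
    · intro b hb
      exact ⟨hf.1 hb, le_sSup hb⟩
  refine ⟨{ toFun := fun U => ⟨{b ∈ P | b ≤ U}, hsheaf U⟩
            invFun := fun f => sSup f.1
            left_inv := fun U => hleft U
            right_inv := fun f => Subtype.ext (hright f.1 f.2)
            map_rel_iff' := ?_ }, fun U => rfl⟩
  intro U V
  constructor
  · intro h
    have : sSup {b ∈ P | b ≤ U} ≤ sSup {b ∈ P | b ≤ V} :=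
      sSup_le_sSup h
    rwa [hleft, hleft] at this
  · intro h b hb
    exact ⟨hb.1, hb.2.trans h⟩
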